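/- Let X be a uniformly convex Banach space with a function u : (0,∞) → (0,∞) such that for all ε > 0 and x, y ∈ X with ‖x‖ ≤ ‖y‖ ≤ 1 and ‖x−y‖ ≥ ε, ‖(x+y)/2‖ ≤ ‖y‖ − u(ε). Let d ≥ 1 and T_1,...,T_d : X → X be commuting linear contractions, x ∈ X with ‖x‖ ≤ 1, and x_n := (n+1)^(−d) Σ_{k ∈ [0,n]^d} T^k x. Define Φ(d,δ,Q) := max(Q, ⌈2^d Q/δ⌉), f(s) := 2s²+2s, G(ε,g) := ((f∘g)^M)^(⌈1/ε⌉)(0), h_{γ,g,d}(n) := Φ(d,γ/2,n)+g(Φ(d,γ/2,n)), Ψ(d,γ,g) := Φ(d,γ/2,G(γ/2,h_{γ,g,d})), and Θ_{u,d}(ε,g) := Ψ(d,u(ε)/2,g). Then for every ε > 0 and g : ℕ → ℕ there exists N ≤ Θ_{u,d}(ε,g) such that for all i, j ∈ [N, N+g(N)], ‖x_i − x_j‖ ≤ ε. -/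

import Mathlib

/-- `box d n` is `[0,n]^d`. -/
def box (d n : ℕ) : Finset (Fin d → ℕ) := Fintype.piFinset fun _ => Finset.range (n+1)

/-- `Tpow T k = T₁^{k₁} ⋯ T_d^{k_d}`. -/
def Tpow {X : Type*} [AddCommGroup X] [Module ℝ X] {d : ℕ}
    (T : Fin d → X →ₗ[ℝ] X) (k : Fin d → ℕ) : X →ₗ[ℝ] X :=
  (List.ofFn fun l => T l ^ k l).prod

/-- The multi-parameter ergodic average `x_n = (n+1)^{-d} ∑_{k ∈ [0,n]^d} T^k x`. -/
noncomputable def erg {X : Type*} [AddCommGroup X] [Module ℝ X] {d : ℕ}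
    (T : Fin d → X →ₗ[ℝ] X) (x : X) (n : ℕ) : X :=
  ((n+1 : ℝ)^d)⁻¹ • ∑ k ∈ box d n, Tpow T k x

/-- `Φ(d,δ,Q) := max(Q, ⌈2^d Q / δ⌉)`. -/
noncomputable def Phi (d : ℕ) (δ : ℝ) (Q : ℕ) : ℕ := max Q ⌈(2^d * Q : ℝ) / δ⌉₊

/-- `iterMax g` is `g^M`, i.e. `g^M(n) = max_{i ≤ n} g(i)`. -/
def iterMax (g : ℕ → ℕ) (n : ℕ) : ℕ := Finset.sup (Finset.range (n+1)) g

/-- `f(s) := 2s² + 2s`. -/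
def fPair (s : ℕ) : ℕ := 2*s^2 + 2*s

/-- `G(ε,g) := ((f ∘ g)^M)^(⌈1/ε⌉)(0)`. -/
noncomputable def Gfun (ε : ℝ) (g : ℕ → ℕ) : ℕ := (iterMax (fPair ∘ g))^[⌈1/ε⌉₊] 0

/-- `h_{γ,g,d}(n) := Φ(d,γ/2,n) + g(Φ(d,γ/2,n))`. -/
noncomputable def hfun (γ : ℝ) (g : ℕ → ℕ) (d n : ℕ) : ℕ :=
  Phi d (γ/2) n + g (Phi d (γ/2) n)

/-- `Ψ(d,γ,g) := Φ(d,γ/2,G(γ/2,h_{γ,g,d}))`. -/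
noncomputable def Psi (d : ℕ) (γ : ℝ) (g : ℕ → ℕ) : ℕ :=
  Phi d (γ/2) (Gfun (γ/2) (hfun γ g d))

/-- `Θ_{u,d}(ε,g) := Ψ(d,u(ε)/2,g)`. -/
noncomputable def Theta (u : ℝ → ℝ) (d : ℕ) (ε : ℝ) (g : ℕ → ℕ) : ℕ :=
  Psi d (u ε / 2) g


section basic
variable {X : Type*} [NormedAddCommGroup X] [NormedSpace ℝ X] {d : ℕ}
  {T : Fin d → X →ₗ[ℝ] X}

lemma mem_box {k : Fin d → ℕ} {n : ℕ} : k ∈ box d n ↔ ∀ l, k l ≤ n := by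
  simp [box, Fintype.mem_piFinset, Nat.lt_succ_iff]

lemma card_box (d n : ℕ) : (box d n).card = (n+1)^d := by
  simp [box, Fintype.card_piFinset]

lemma list_prod_contr : ∀ (L : List (X →ₗ[ℝ] X)),
    (∀ f ∈ L, ∀ y : X, ‖f y‖ ≤ ‖y‖) → ∀ y : X, ‖L.prod y‖ ≤ ‖y‖ := by
  intro L
  induction L with
  | nil => intro _ y; simp
  | cons a L ih =>
    intro h y
    have : (a :: L).prod = a * L.prod := List.prod_cons
    rw [this]
    calc ‖(a * L.prod) y‖ = ‖a (L.prod y)‖ := rfl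
      _ ≤ ‖L.prod y‖ := h a List.mem_cons_self _
      _ ≤ ‖y‖ := ih (fun f hf => h f (List.mem_cons_of_mem a hf)) y

lemma pow_contr (f : X →ₗ[ℝ] X) (hf : ∀ y : X, ‖f y‖ ≤ ‖y‖) :
    ∀ (n : ℕ) (y : X), ‖(f^n) y‖ ≤ ‖y‖ := by
  intro n
  induction n with
  | zero => intro y; simp
  | succ n ih =>
    intro y
    have : f^(n+1) = f^n * f := pow_succ f n
    rw [this]
    calc ‖(f^n * f) y‖ = ‖(f^n) (f y)‖ := rfl
      _ ≤ ‖f y‖ := ih _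
      _ ≤ ‖y‖ := hf y

lemma tpow_contr (hcontr : ∀ l (y : X), ‖T l y‖ ≤ ‖y‖) (k : Fin d → ℕ) (y : X) :
    ‖Tpow T k y‖ ≤ ‖y‖ := by
  apply list_prod_contr
  intro f hf
  rw [List.mem_ofFn] at hf
  obtain ⟨l, rfl⟩ := hf
  intro y
  simpa using pow_contr (T l) (hcontr l) (k l) y

lemma ofFn_prod_mul {M : Type*} [Monoid M] :
    ∀ {n : ℕ} (a b : Fin n → M), (∀ i j, Commute (a i) (b j)) →
      (List.ofFn a).prod * (List.ofFn b).prod = (List.ofFn (fun i => a i * b i)).prod := by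
  intro n
  induction n with
  | zero => intro a b _; simp
  | succ n ih =>
    intro a b h
    rw [List.ofFn_succ, List.ofFn_succ, List.ofFn_succ, List.prod_cons, List.prod_cons,
      List.prod_cons]
    have hc : Commute (b 0) (List.ofFn fun i : Fin n => a i.succ).prod := by
      apply Commute.list_prod_right
      intro z hz
      rw [List.mem_ofFn] at hz
      obtain ⟨l, rfl⟩ := hz
      exact (h l.succ 0).symm
    calc a 0 * (List.ofFn fun i : Fin n => a i.succ).prod *
          (b 0 * (List.ofFn fun i : Fin n => b i.succ).prod)
        = a 0 * (((List.ofFn fun i : Fin n => a i.succ).prod * b 0) *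
            (List.ofFn fun i : Fin n => b i.succ).prod) := by
            simp only [mul_assoc]
      _ = a 0 * ((b 0 * (List.ofFn fun i : Fin n => a i.succ).prod) *
            (List.ofFn fun i : Fin n => b i.succ).prod) := by rw [← hc.eq]
      _ = (a 0 * b 0) * ((List.ofFn fun i : Fin n => a i.succ).prod *
            (List.ofFn fun i : Fin n => b i.succ).prod) := by
            simp only [mul_assoc]
      _ = (a 0 * b 0) * (List.ofFn fun i : Fin n => a i.succ * b i.succ).prod := by
            rw [ih _ _ (fun i j => h i.succ j.succ)]

lemma tpow_mul (hcomm : ∀ l m, T l ∘ₗ T m = T m ∘ₗ T l) (a b : Fin d → ℕ) :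
    Tpow T a * Tpow T b = Tpow T (a + b) := by
  unfold Tpow
  rw [ofFn_prod_mul]
  · congr 1
    apply congrArg
    funext i
    rw [← pow_add]
    rfl
  · intro i j
    have : Commute (T i) (T j) := by
      show T i * T j = T j * T i
      rw [Module.End.mul_eq_comp, Module.End.mul_eq_comp]
      exact hcomm i j
    exact this.pow_pow _ _

end basic

lemma count (m i : ℕ) : ∀ (d : ℕ) (j : Fin d → ℕ), (∀ l, j l ≤ i) →
    (m+1) * (m+1)^d ≤ (m+1) * (∏ l, (m + 1 - j l)) + d * i * (m+1)^d := by
  intro d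
  induction d with
  | zero => intro j _; simp
  | succ d ih =>
    intro j hj
    have key1 : m + 1 ≤ (m + 1 - j 0) + i :=
      le_trans le_tsub_add (Nat.add_le_add_left (hj 0) _)
    have key2 : m + 1 - j 0 ≤ m + 1 := Nat.sub_le _ _
    have ihj := ih (fun l => j l.succ) (fun l => hj l.succ)
    rw [Fin.prod_univ_succ]
    calc (m+1) * (m+1)^(d+1) = ((m+1) * (m+1)^d) * (m+1) := by ring
      _ ≤ ((m+1) * (m+1)^d) * ((m + 1 - j 0) + i) := Nat.mul_le_mul_left _ key1
      _ = (m + 1 - j 0) * ((m+1) * (m+1)^d) + i * ((m+1) * (m+1)^d) := by ring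
      _ ≤ (m + 1 - j 0) * ((m+1) * (∏ l : Fin d, (m + 1 - j l.succ)) + d * i * (m+1)^d)
            + i * ((m+1) * (m+1)^d) := by
          exact Nat.add_le_add_right (Nat.mul_le_mul_left _ ihj) _
      _ = (m+1) * ((m + 1 - j 0) * ∏ l : Fin d, (m + 1 - j l.succ))
            + ((m + 1 - j 0) * (d * i * (m+1)^d) + i * (m+1)^(d+1)) := by ring
      _ ≤ (m+1) * ((m + 1 - j 0) * ∏ l : Fin d, (m + 1 - j l.succ))
            + ((m + 1) * (d * i * (m+1)^d) + i * (m+1)^(d+1)) := by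
          apply Nat.add_le_add_left
          exact Nat.add_le_add_right (Nat.mul_le_mul_right _ key2) _
      _ = (m+1) * ((m + 1 - j 0) * ∏ l : Fin d, (m + 1 - j l.succ)) + (d+1) * i * (m+1)^(d+1) := by
          ring

lemma box_inter (d m : ℕ) (j : Fin d → ℕ) :
    box d m ∩ (box d m).image (fun k => j + k) =
      Fintype.piFinset (fun l => Finset.Icc (j l) m) := by
  ext k
  simp only [Finset.mem_inter, Finset.mem_image, Fintype.mem_piFinset, Finset.mem_Icc, mem_box]
  constructor
  · rintro ⟨hk, k', hk', rfl⟩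
    intro l
    exact ⟨Nat.le_add_right _ _, hk l⟩
  · intro h
    refine ⟨fun l => (h l).2, fun l => k l - j l, fun l => le_trans (Nat.sub_le _ _) (h l).2, ?_⟩
    funext l
    simpa using Nat.add_sub_cancel' (h l).1

lemma card_box_inter (d m : ℕ) (j : Fin d → ℕ) :
    (box d m ∩ (box d m).image (fun k => j + k)).card = ∏ l, (m + 1 - j l) := by
  rw [box_inter, Fintype.card_piFinset]
  simp [Nat.card_Icc]

section core
variable {X : Type*} [NormedAddCommGroup X] [NormedSpace ℝ X] {d : ℕ}
  {T : Fin d → X →ₗ[ℝ] X}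





lemma tpow_tpow (hcomm : ∀ l m, T l ∘ₗ T m = T m ∘ₗ T l) (a b : Fin d → ℕ) (y : X) :
    Tpow T a (Tpow T b y) = Tpow T (a + b) y := by
  rw [← Module.End.mul_apply, tpow_mul hcomm]

lemma cpos (n : ℕ) : (0:ℝ) < ((n+1 : ℝ)^d) := by positivity

lemma cmul (n : ℕ) : ((n+1 : ℝ)^d)⁻¹ * ((n+1 : ℝ)^d) = 1 :=
  inv_mul_cancel₀ (ne_of_gt (cpos n))

lemma erg_norm_le (hcontr : ∀ l (y : X), ‖T l y‖ ≤ ‖y‖) (y : X) (n : ℕ) :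
    ‖erg T y n‖ ≤ ‖y‖ := by
  rw [erg, norm_smul]
  have h1 : ‖∑ k ∈ box d n, Tpow T k y‖ ≤ ((box d n).card : ℝ) * ‖y‖ := by
    calc ‖∑ k ∈ box d n, Tpow T k y‖ ≤ ∑ k ∈ box d n, ‖Tpow T k y‖ := norm_sum_le _ _
      _ ≤ ((box d n).card : ℝ) * ‖y‖ := by
          have := Finset.sum_le_card_nsmul (box d n) (fun k => ‖Tpow T k y‖) ‖y‖
            (fun k _ => tpow_contr hcontr k y)
          simpa [nsmul_eq_mul] using this
  have h2 : ‖((n+1 : ℝ)^d)⁻¹‖ = ((n+1 : ℝ)^d)⁻¹ := by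
    rw [Real.norm_eq_abs, abs_of_pos (by positivity)]
  rw [h2]
  calc ((n+1 : ℝ)^d)⁻¹ * ‖∑ k ∈ box d n, Tpow T k y‖
      ≤ ((n+1 : ℝ)^d)⁻¹ * (((box d n).card : ℝ) * ‖y‖) := by
        apply mul_le_mul_of_nonneg_left h1 (by positivity)
    _ = ‖y‖ := by
        rw [card_box]
        push_cast
        rw [← mul_assoc, cmul, one_mul]

lemma erg_smul_add (y z : X) (n : ℕ) :
    erg T ((2:ℝ)⁻¹ • (y + z)) n = (2:ℝ)⁻¹ • (erg T y n + erg T z n) := by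
  have h : ∑ k ∈ box d n, Tpow T k ((2:ℝ)⁻¹ • (y + z)) =
      (2:ℝ)⁻¹ • ((∑ k ∈ box d n, Tpow T k y) + ∑ k ∈ box d n, Tpow T k z) := by
    calc ∑ k ∈ box d n, Tpow T k ((2:ℝ)⁻¹ • (y + z))
        = ∑ k ∈ box d n, ((2:ℝ)⁻¹ • Tpow T k y + (2:ℝ)⁻¹ • Tpow T k z) := by
          apply Finset.sum_congr rfl
          intro k _
          rw [map_smul, map_add, smul_add]
      _ = (2:ℝ)⁻¹ • ((∑ k ∈ box d n, Tpow T k y) + ∑ k ∈ box d n, Tpow T k z) := by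
          rw [Finset.sum_add_distrib, ← Finset.smul_sum, ← Finset.smul_sum, ← smul_add]
  rw [erg, h, erg, erg]
  module

lemma erg_erg (hcomm : ∀ l m, T l ∘ₗ T m = T m ∘ₗ T l) (x : X) (i m : ℕ) :
    erg T (erg T x m) i = erg T (erg T x i) m := by
  have A : ∀ p q : ℕ, erg T (erg T x q) p =
      (((p+1 : ℝ)^d)⁻¹ * ((q+1 : ℝ)^d)⁻¹) •
        ∑ j ∈ box d p, ∑ k ∈ box d q, Tpow T (j + k) x := by
    intro p q
    simp only [erg, map_smul, map_sum, tpow_tpow hcomm, Finset.smul_sum, smul_smul]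
  rw [A, A, Finset.sum_comm, mul_comm]
  congr 1
  apply Finset.sum_congr rfl
  intro j _
  apply Finset.sum_congr rfl
  intro k _
  rw [add_comm]

end core

section core2
variable {X : Type*} [NormedAddCommGroup X] [NormedSpace ℝ X] {d : ℕ}
  {T : Fin d → X →ₗ[ℝ] X}

lemma norm_sum_tpow_le (hcontr : ∀ l (y : X), ‖T l y‖ ≤ ‖y‖) (x : X)
    (A : Finset (Fin d → ℕ)) : ‖∑ k ∈ A, Tpow T k x‖ ≤ (A.card : ℝ) * ‖x‖ := by
  calc ‖∑ k ∈ A, Tpow T k x‖ ≤ ∑ k ∈ A, ‖Tpow T k x‖ := norm_sum_le _ _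
    _ ≤ (A.card : ℝ) * ‖x‖ := by
        have := Finset.sum_le_card_nsmul A (fun k => ‖Tpow T k x‖) ‖x‖
          (fun k _ => tpow_contr hcontr k x)
        simpa [nsmul_eq_mul] using this

lemma tpow_erg_sub (hcomm : ∀ l m, T l ∘ₗ T m = T m ∘ₗ T l)
    (hcontr : ∀ l (y : X), ‖T l y‖ ≤ ‖y‖) (x : X) (i m : ℕ)
    (j : Fin d → ℕ) (hj : ∀ l, j l ≤ i) :
    ‖Tpow T j (erg T x m) - erg T x m‖ ≤ 2*d*i/(m+1) * ‖x‖ := by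
  set S := box d m with hS
  set S' := S.image (fun k => j + k) with hS'
  have hinj : Function.Injective (fun k : Fin d → ℕ => j + k) := fun a b hab => by
    have : j + a = j + b := hab
    exact add_left_cancel this
  have h1 : Tpow T j (erg T x m) = ((m+1 : ℝ)^d)⁻¹ • ∑ k ∈ S', Tpow T k x := by
    rw [erg, map_smul, map_sum]
    congr 1
    rw [hS', Finset.sum_image (fun a _ b _ h => hinj h)]
    exact Finset.sum_congr rfl fun k _ => tpow_tpow hcomm j k x
  have h2 : Tpow T j (erg T x m) - erg T x m =
      ((m+1 : ℝ)^d)⁻¹ • ((∑ k ∈ S' \ S, Tpow T k x) - ∑ k ∈ S \ S', Tpow T k x) := by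
    rw [h1, erg, ← smul_sub]
    congr 1
    rw [← Finset.sum_inter_add_sum_sdiff S' S (fun k => Tpow T k x),
        ← Finset.sum_inter_add_sum_sdiff S S' (fun k => Tpow T k x), Finset.inter_comm]
    abel
  have hcardS : S.card = (m+1)^d := card_box d m
  have hcard' : (S ∩ S').card = ∏ l, (m+1 - j l) := card_box_inter d m j
  have hsub : (∏ l, (m+1 - j l)) ≤ (m+1)^d := by
    rw [← hcard', ← hcardS]; exact Finset.card_le_card Finset.inter_subset_left
  have hc1 : (S \ S').card = (m+1)^d - ∏ l, (m+1-j l) := by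
    have := Finset.card_sdiff_add_card_inter S S'
    omega
  have hc2 : (S' \ S).card = (m+1)^d - ∏ l, (m+1-j l) := by
    have h := Finset.card_sdiff_add_card_inter S' S
    have hcS' : S'.card = (m+1)^d := by
      rw [hS', Finset.card_image_of_injective _ hinj, hcardS]
    rw [Finset.inter_comm] at h
    omega
  have hcount := count m i d j hj
  rw [h2, norm_smul, Real.norm_eq_abs, abs_of_pos (by positivity : (0:ℝ) < ((m+1:ℝ)^d)⁻¹)]
  have hnorm : ‖(∑ k ∈ S' \ S, Tpow T k x) - ∑ k ∈ S \ S', Tpow T k x‖ ≤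
      (2 * ((m+1)^d - ∏ l, (m+1-j l)) : ℕ) * ‖x‖ := by
    calc ‖(∑ k ∈ S' \ S, Tpow T k x) - ∑ k ∈ S \ S', Tpow T k x‖
        ≤ ‖∑ k ∈ S' \ S, Tpow T k x‖ + ‖∑ k ∈ S \ S', Tpow T k x‖ := norm_sub_le _ _
      _ ≤ ((S' \ S).card : ℝ) * ‖x‖ + ((S \ S').card : ℝ) * ‖x‖ :=
          add_le_add (norm_sum_tpow_le hcontr x _) (norm_sum_tpow_le hcontr x _)
      _ = (2 * ((m+1)^d - ∏ l, (m+1-j l)) : ℕ) * ‖x‖ := by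
          rw [hc1, hc2]; push_cast; ring
  calc ((m+1:ℝ)^d)⁻¹ * ‖(∑ k ∈ S' \ S, Tpow T k x) - ∑ k ∈ S \ S', Tpow T k x‖
      ≤ ((m+1:ℝ)^d)⁻¹ * ((2 * ((m+1)^d - ∏ l, (m+1-j l)) : ℕ) * ‖x‖) :=
        mul_le_mul_of_nonneg_left hnorm (by positivity)
    _ ≤ 2*d*i/(m+1) * ‖x‖ := by
        rw [← mul_assoc]
        apply mul_le_mul_of_nonneg_right _ (norm_nonneg x)
        rw [inv_mul_eq_div, div_le_div_iff₀ (by positivity) (by positivity)]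
        have hcR : (((m+1) * (m+1)^d : ℕ) : ℝ) ≤
            (((m+1) * (∏ l, (m + 1 - j l)) + d * i * (m+1)^d : ℕ) : ℝ) :=
          Nat.cast_le.mpr hcount
        push_cast [Nat.cast_sub hsub] at hcR ⊢
        linarith [hcR]

end core2

section core3
variable {X : Type*} [NormedAddCommGroup X] [NormedSpace ℝ X] {d : ℕ}
  {T : Fin d → X →ₗ[ℝ] X}

lemma erg_avg_sub (hcomm : ∀ l m, T l ∘ₗ T m = T m ∘ₗ T l)
    (hcontr : ∀ l (y : X), ‖T l y‖ ≤ ‖y‖) (x : X) (i m : ℕ) :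
    ‖erg T (erg T x m) i - erg T x m‖ ≤ 2*d*i/(m+1) * ‖x‖ := by
  set w := erg T x m with hw
  have h : erg T w i - w = ((i+1:ℝ)^d)⁻¹ • ∑ j ∈ box d i, (Tpow T j w - w) := by
    rw [Finset.sum_sub_distrib, smul_sub, erg]
    congr 1
    rw [Finset.sum_const, card_box, ← Nat.cast_smul_eq_nsmul ℝ, smul_smul]
    push_cast
    rw [inv_mul_cancel₀ (by positivity), one_smul]
  rw [h, norm_smul, Real.norm_eq_abs, abs_of_pos (by positivity : (0:ℝ) < ((i+1:ℝ)^d)⁻¹)]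
  have hbd : ∀ j ∈ box d i, ‖Tpow T j w - w‖ ≤ 2*d*i/(m+1) * ‖x‖ := by
    intro j hj
    exact tpow_erg_sub hcomm hcontr x i m j (mem_box.1 hj)
  calc ((i+1:ℝ)^d)⁻¹ * ‖∑ j ∈ box d i, (Tpow T j w - w)‖
      ≤ ((i+1:ℝ)^d)⁻¹ * (((box d i).card : ℝ) * (2*d*i/(m+1) * ‖x‖)) := by
        apply mul_le_mul_of_nonneg_left _ (by positivity)
        calc ‖∑ j ∈ box d i, (Tpow T j w - w)‖ ≤ ∑ j ∈ box d i, ‖Tpow T j w - w‖ :=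
              norm_sum_le _ _
          _ ≤ ((box d i).card : ℝ) * (2*d*i/(m+1) * ‖x‖) := by
              have := Finset.sum_le_card_nsmul (box d i) (fun j => ‖Tpow T j w - w‖)
                (2*d*i/(m+1) * ‖x‖) hbd
              simpa [nsmul_eq_mul] using this
    _ = 2*d*i/(m+1) * ‖x‖ := by
        rw [card_box]
        push_cast
        rw [← mul_assoc, inv_mul_cancel₀ (by positivity), one_mul]

lemma two_mul_le_two_pow {d : ℕ} (hd : 1 ≤ d) : 2*d ≤ 2^d := by
  induction d with
  | zero => simp at hd
  | succ d ih =>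
    rcases Nat.eq_zero_or_pos d with rfl | hpos
    · norm_num
    · have h1 := ih hpos
      have h2 : 1 < 2^d := Nat.one_lt_two_pow_iff.mpr (by omega)
      rw [pow_succ]
      omega

lemma drop (hd : 1 ≤ d) (hcomm : ∀ l m, T l ∘ₗ T m = T m ∘ₗ T l)
    (hcontr : ∀ l (y : X), ‖T l y‖ ≤ ‖y‖) (x : X) {i j s : ℕ} (m : ℕ)
    (his : i ≤ s) (hjs : j ≤ s) :
    ‖erg T x m‖ ≤ ‖(2:ℝ)⁻¹ • (erg T x i + erg T x j)‖ + 2^d * s/(m+1) * ‖x‖ := by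
  have h1 := erg_avg_sub hcomm hcontr x i m
  have h2 := erg_avg_sub hcomm hcontr x j m
  have h4 : (2:ℝ)⁻¹ • (erg T (erg T x m) i + erg T (erg T x m) j) =
      erg T ((2:ℝ)⁻¹ • (erg T x i + erg T x j)) m := by
    rw [erg_erg hcomm x i m, erg_erg hcomm x j m, erg_smul_add]
  have h3 : erg T x m - erg T ((2:ℝ)⁻¹ • (erg T x i + erg T x j)) m =
      (2:ℝ)⁻¹ • ((erg T x m - erg T (erg T x m) i) + (erg T x m - erg T (erg T x m) j)) := by
    rw [← h4]; module
  have hE : ‖erg T x m - erg T ((2:ℝ)⁻¹ • (erg T x i + erg T x j)) m‖ ≤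
      2^d * s/(m+1) * ‖x‖ := by
    rw [h3, norm_smul, Real.norm_eq_abs, abs_of_pos (by norm_num : (0:ℝ) < (2:ℝ)⁻¹)]
    have hsum : ‖(erg T x m - erg T (erg T x m) i) + (erg T x m - erg T (erg T x m) j)‖ ≤
        2*d*i/(m+1) * ‖x‖ + 2*d*j/(m+1) * ‖x‖ := by
      refine (norm_add_le _ _).trans (add_le_add ?_ ?_)
      · rw [norm_sub_rev]; exact h1
      · rw [norm_sub_rev]; exact h2
    calc (2:ℝ)⁻¹ * ‖(erg T x m - erg T (erg T x m) i) + (erg T x m - erg T (erg T x m) j)‖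
        ≤ (2:ℝ)⁻¹ * (2*d*i/(m+1) * ‖x‖ + 2*d*j/(m+1) * ‖x‖) :=
          mul_le_mul_of_nonneg_left hsum (by norm_num)
      _ ≤ 2^d * s/(m+1) * ‖x‖ := by
          have hds : (d : ℝ) * i + d * j ≤ 2^d * s := by
            have h2d : (2*d : ℝ) ≤ 2^d := by exact_mod_cast two_mul_le_two_pow hd
            have hi' : (i:ℝ) ≤ s := by exact_mod_cast his
            have hj' : (j:ℝ) ≤ s := by exact_mod_cast hjs
            have hd0 : (0:ℝ) ≤ d := by positivity
            nlinarith
          have hm : (0:ℝ) < (m:ℝ)+1 := by positivity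
          have hx0 : (0:ℝ) ≤ ‖x‖ := norm_nonneg x
          calc (2:ℝ)⁻¹ * (2*d*i/(m+1) * ‖x‖ + 2*d*j/(m+1) * ‖x‖)
              = ((d:ℝ)*i + (d:ℝ)*j) * ‖x‖ / ((m:ℝ)+1) := by ring
            _ ≤ (2:ℝ)^d * (s:ℝ) * ‖x‖ / ((m:ℝ)+1) := by
                gcongr
            _ = 2^d * (s:ℝ)/((m:ℝ)+1) * ‖x‖ := by ring
  calc ‖erg T x m‖ = ‖erg T ((2:ℝ)⁻¹ • (erg T x i + erg T x j)) m +
        (erg T x m - erg T ((2:ℝ)⁻¹ • (erg T x i + erg T x j)) m)‖ := by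
        congr 1; abel
    _ ≤ ‖erg T ((2:ℝ)⁻¹ • (erg T x i + erg T x j)) m‖ +
        ‖erg T x m - erg T ((2:ℝ)⁻¹ • (erg T x i + erg T x j)) m‖ := norm_add_le _ _
    _ ≤ ‖(2:ℝ)⁻¹ • (erg T x i + erg T x j)‖ + 2^d * s/(m+1) * ‖x‖ :=
        add_le_add (erg_norm_le hcontr _ m) hE

end core3

lemma iterMax_ge (g : ℕ → ℕ) (n : ℕ) : g n ≤ iterMax g n :=
  Finset.le_sup (by simp)

lemma fPair_ge (n : ℕ) : n ≤ fPair n := by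
  have h : fPair n = (2*n^2 + n) + n := by simp only [fPair]; ring
  rw [h]
  exact Nat.le_add_left n _

lemma metastable {X : Type*} [NormedAddCommGroup X] [NormedSpace ℝ X] {d : ℕ}
    (hd : 1 ≤ d) {T : Fin d → X →ₗ[ℝ] X}
    (hcomm : ∀ l m, T l ∘ₗ T m = T m ∘ₗ T l)
    (hcontr : ∀ l (y : X), ‖T l y‖ ≤ ‖y‖) (x : X) (hx : ‖x‖ ≤ 1)
    {ε uε : ℝ} (hε : 0 < ε) (huε : 0 < uε)
    (humod' : ∀ i j : ℕ, ‖erg T x i‖ ≤ ‖erg T x j‖ → ε ≤ ‖erg T x i - erg T x j‖ →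
      ‖(2:ℝ)⁻¹ • (erg T x i + erg T x j)‖ ≤ ‖erg T x j‖ - uε)
    (g : ℕ → ℕ) :
    ∃ N ≤ Psi d (uε/2) g, ∀ i ∈ Set.Icc N (N + g N), ∀ j ∈ Set.Icc N (N + g N),
      ‖erg T x i - erg T x j‖ ≤ ε := by
  by_contra hcon
  push_neg at hcon
  have hδ : (0:ℝ) < uε/2/2 := by positivity
  set F := iterMax (fPair ∘ hfun (uε/2) g d) with hFdef
  set K := ⌈1/(uε/2/2)⌉₊ with hKdef
  set c : ℕ → ℕ := fun k => F^[k] 0 with hcdef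
  have hPsi : Psi d (uε/2) g = Phi d (uε/2/2) (c K) := rfl
  have hFge : ∀ n, n ≤ F n := by
    intro n
    calc n ≤ Phi d (uε/2/2) n := le_max_left _ _
      _ ≤ hfun (uε/2) g d n := Nat.le_add_right _ _
      _ ≤ fPair (hfun (uε/2) g d n) := fPair_ge _
      _ ≤ F n := by
          rw [hFdef]
          exact iterMax_ge (fPair ∘ hfun (uε/2) g d) n
  have hcsucc : ∀ k, c (k+1) = F (c k) := by
    intro k
    simp only [hcdef]
    exact Function.iterate_succ_apply' F k 0
  have hcmono : Monotone c := by
    apply monotone_nat_of_le_succ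
    intro k
    rw [hcsucc k]
    exact hFge _
  have hPhiMono : ∀ {a b : ℕ}, a ≤ b → Phi d (uε/2/2) a ≤ Phi d (uε/2/2) b := by
    intro a b hab
    apply max_le_max hab
    apply Nat.ceil_le_ceil
    apply (div_le_div_iff_of_pos_right hδ).mpr
    have : (a:ℝ) ≤ b := Nat.cast_le.mpr hab
    nlinarith [pow_pos (by norm_num : (0:ℝ) < 2) d]
  have hwin : ∀ k ≤ K, ∃ p q : ℕ,
      p ∈ Set.Icc (Phi d (uε/2/2) (c k)) (hfun (uε/2) g d (c k)) ∧
      q ∈ Set.Icc (Phi d (uε/2/2) (c k)) (hfun (uε/2) g d (c k)) ∧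
      ε ≤ ‖erg T x p - erg T x q‖ ∧ ‖erg T x p‖ ≤ ‖erg T x q‖ := by
    intro k hk
    have hN : Phi d (uε/2/2) (c k) ≤ Psi d (uε/2) g := by
      rw [hPsi]
      exact hPhiMono (hcmono hk)
    obtain ⟨i, hi, j, hj, hij⟩ := hcon _ hN
    have hIcc : Set.Icc (Phi d (uε/2/2) (c k))
        (Phi d (uε/2/2) (c k) + g (Phi d (uε/2/2) (c k))) =
        Set.Icc (Phi d (uε/2/2) (c k)) (hfun (uε/2) g d (c k)) := rfl
    rw [hIcc] at hi hj
    rcases le_total ‖erg T x i‖ ‖erg T x j‖ with hh | hh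
    · exact ⟨i, j, hi, hj, le_of_lt hij, hh⟩
    · exact ⟨j, i, hj, hi, by rw [norm_sub_rev]; exact le_of_lt hij, hh⟩
  have main : ∀ k : ℕ, k ≤ K → ∃ p q : ℕ,
      p ∈ Set.Icc (Phi d (uε/2/2) (c k)) (hfun (uε/2) g d (c k)) ∧
      q ∈ Set.Icc (Phi d (uε/2/2) (c k)) (hfun (uε/2) g d (c k)) ∧
      ε ≤ ‖erg T x p - erg T x q‖ ∧ ‖erg T x p‖ ≤ ‖erg T x q‖ ∧
      ‖erg T x q‖ ≤ 1 - k * (uε/2) := by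
    intro k
    induction k with
    | zero =>
      intro hk
      obtain ⟨p, q, hp, hq, hpq, hord⟩ := hwin 0 hk
      refine ⟨p, q, hp, hq, hpq, hord, ?_⟩
      simp only [Nat.cast_zero, zero_mul, sub_zero]
      exact le_trans (erg_norm_le hcontr x q) hx
    | succ k ih =>
      intro hk1
      have hk : k ≤ K := le_trans (Nat.le_succ k) hk1
      obtain ⟨p, q, hp, hq, hpq, hord, hbound⟩ := ih hk
      have hhalf : ‖(2:ℝ)⁻¹ • (erg T x p + erg T x q)‖ ≤ ‖erg T x q‖ - uε :=
        humod' p q hord hpq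
      obtain ⟨p', q', hp', hq', hpq', hord'⟩ := hwin (k+1) hk1
      refine ⟨p', q', hp', hq', hpq', hord', ?_⟩
      have hdrop := drop hd hcomm hcontr x (m := q') hp.2 hq.2
      -- error term bound
      have hq'ge : (Phi d (uε/2/2) (c (k+1)) : ℝ) ≤ (q' : ℝ) := Nat.cast_le.mpr hq'.1
      have hPhige : (2^d * (c (k+1)) : ℝ)/(uε/2/2) ≤ (Phi d (uε/2/2) (c (k+1)) : ℝ) := by
        calc (2^d * (c (k+1)) : ℝ)/(uε/2/2) ≤ (⌈(2^d * (c (k+1)) : ℝ)/(uε/2/2)⌉₊ : ℝ) :=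
              Nat.le_ceil _
          _ ≤ (Phi d (uε/2/2) (c (k+1)) : ℝ) := by
              apply Nat.cast_le.mpr
              simp only [Phi]
              exact le_max_right _ _
      have hfk : (fPair (hfun (uε/2) g d (c k)) : ℝ) ≤ (c (k+1) : ℝ) := by
        apply Nat.cast_le.mpr
        rw [hcsucc k, hFdef]
        exact iterMax_ge (fPair ∘ hfun (uε/2) g d) (c k)
      have hsle : ((hfun (uε/2) g d (c k) : ℕ) : ℝ) ≤ (fPair (hfun (uε/2) g d (c k)) : ℝ) :=
        Nat.cast_le.mpr (fPair_ge _)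
      have hEbound : (2:ℝ)^d * (hfun (uε/2) g d (c k) : ℝ) / ((q':ℝ) + 1) * ‖x‖ ≤ uε/2/2 := by
        have hq1 : (0:ℝ) < (q':ℝ) + 1 := by positivity
        have h2d : (0:ℝ) < 2^d := by positivity
        have hkey : (2:ℝ)^d * (hfun (uε/2) g d (c k) : ℝ) ≤ (uε/2/2) * ((q':ℝ) + 1) := by
          have hc1 : (2:ℝ)^d * (c (k+1) : ℝ) ≤ (uε/2/2) * (Phi d (uε/2/2) (c (k+1)) : ℝ) := by
            have := mul_le_mul_of_nonneg_left hPhige (le_of_lt hδ)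
            rwa [mul_div_cancel₀ _ (ne_of_gt hδ)] at this
          calc (2:ℝ)^d * (hfun (uε/2) g d (c k) : ℝ)
              ≤ (2:ℝ)^d * (c (k+1) : ℝ) := by
                apply mul_le_mul_of_nonneg_left (le_trans hsle hfk) (le_of_lt h2d)
            _ ≤ (uε/2/2) * (Phi d (uε/2/2) (c (k+1)) : ℝ) := hc1
            _ ≤ (uε/2/2) * ((q':ℝ) + 1) := by
                apply mul_le_mul_of_nonneg_left _ (le_of_lt hδ)
                linarith [hq'ge]
        have hdivle : (2:ℝ)^d * (hfun (uε/2) g d (c k) : ℝ) / ((q':ℝ) + 1) ≤ uε/2/2 := by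
          rw [div_le_iff₀ hq1]
          exact hkey
        calc (2:ℝ)^d * (hfun (uε/2) g d (c k) : ℝ) / ((q':ℝ) + 1) * ‖x‖
            ≤ (uε/2/2) * 1 := by
              apply mul_le_mul hdivle hx (norm_nonneg x) (le_of_lt hδ)
          _ = uε/2/2 := mul_one _
      push_cast
      push_cast at hbound
      linarith [hdrop, hhalf, hbound, hEbound]
  obtain ⟨p, q, hp, hq, hpq, hord, hbound⟩ := main K le_rfl
  have hKc : (1:ℝ)/(uε/2/2) ≤ (K:ℝ) := by
    rw [hKdef]
    exact Nat.le_ceil _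
  have h1 : (1:ℝ) ≤ (K:ℝ) * (uε/2/2) := by
    have := mul_le_mul_of_nonneg_right hKc (le_of_lt hδ)
    rwa [one_div, inv_mul_cancel₀ (ne_of_gt hδ)] at this
  have h0 : (0:ℝ) ≤ ‖erg T x q‖ := norm_nonneg _
  nlinarith [hbound, h1, h0]

theorem stmt9 {X : Type*} [NormedAddCommGroup X] [NormedSpace ℝ X] [CompleteSpace X]
    (d : ℕ) (hd : 1 ≤ d) (T : Fin d → X →ₗ[ℝ] X)
    (hcomm : ∀ l m, T l ∘ₗ T m = T m ∘ₗ T l)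
    (hcontr : ∀ l (y : X), ‖T l y‖ ≤ ‖y‖)
    (x : X) (hx : ‖x‖ ≤ 1)
    (u : ℝ → ℝ) (hu : ∀ ε > (0:ℝ), 0 < u ε)
    (humod : ∀ ε > (0:ℝ), ∀ y z : X, ‖y‖ ≤ ‖z‖ → ‖z‖ ≤ 1 → ε ≤ ‖y - z‖ →
      ‖(2:ℝ)⁻¹ • (y + z)‖ ≤ ‖z‖ - u ε)
    (ε : ℝ) (hε : 0 < ε) (g : ℕ → ℕ) :
    ∃ N ≤ Theta u d ε g, ∀ i ∈ Set.Icc N (N + g N), ∀ j ∈ Set.Icc N (N + g N),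
      ‖erg T x i - erg T x j‖ ≤ ε := by
  have humod' : ∀ i j : ℕ, ‖erg T x i‖ ≤ ‖erg T x j‖ → ε ≤ ‖erg T x i - erg T x j‖ →
      ‖(2:ℝ)⁻¹ • (erg T x i + erg T x j)‖ ≤ ‖erg T x j‖ - u ε :=
    fun i j h1 h2 => humod ε hε _ _ h1 (le_trans (erg_norm_le hcontr x j) hx) h2
  have h := metastable hd hcomm hcontr x hx hε (hu ε hε) humod' g
  exact h
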